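/- Let M ≥ 2 be an integer, let a ∈ ℝ with a ≠ 0, and let r be a real number with r ≥ D(M−1) + 1, where D(t) = t^{t/2}/2^{t−1}. Then the geometric progression A = {a·r^i : i = 0, 1, …, M−1} satisfies C(A) = M−1, the highest possible complexity of a set of size M. -/

import Mathlib

open Matrix BigOperators

lemma int_det {n : ℕ} (A : Matrix (Fin n) (Fin n) ℝ) (h : ∀ i j, ∃ z : ℤ, A i j = z) :
    ∃ z : ℤ, A.det = z := by
  choose Az hAz using h
  refine ⟨(Matrix.of Az).det, ?_⟩
  have hA : A = (Matrix.of Az).map ⇑(Int.castRingHom ℝ) := by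
    ext i j; simp [hAz]
  rw [hA, ← RingHom.mapMatrix_apply, ← RingHom.map_det]
  simp


lemma hadamard_pm1 (q : ℕ) (A : Matrix (Fin q) (Fin q) ℝ)
    (h : ∀ i j, A i j = 1 ∨ A i j = -1) : (A.det)^2 ≤ (q:ℝ)^q := by
  rcases Nat.eq_zero_or_pos q with hq | hq
  · subst hq
    simp [Matrix.det_fin_zero]
  have hq' : (q:ℝ) ≠ 0 := Nat.cast_ne_zero.mpr hq.ne'
  have hG : (A * Aᴴ).IsHermitian := isHermitian_mul_conjTranspose_self A
  have hPSD : (A * Aᴴ).PosSemidef := posSemidef_self_mul_conjTranspose A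
  set μ := hG.eigenvalues with hμdef
  have hμ0 : ∀ i, 0 ≤ μ i := fun i => hPSD.eigenvalues_nonneg i
  have hdet : (A.det)^2 = ∏ i, μ i := by
    have := hG.det_eq_prod_eigenvalues
    rw [Matrix.det_mul, Matrix.det_conjTranspose] at this
    rw [star_trivial] at this
    rw [sq, this]
    simp [hμdef]
  have htrace : (A * Aᴴ).trace = ∑ i, μ i := by
    rw [hG.trace_eq_sum_eigenvalues]
    simp [hμdef]
  have htrace2 : (A * Aᴴ).trace = (q:ℝ) * q := by
    have hGii : ∀ i, (A * Aᴴ) i i = (q:ℝ) := by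
      intro i
      have h1 : (A * Aᴴ) i i = ∑ j, A i j * A i j := by
        simp [Matrix.mul_apply, Matrix.conjTranspose_apply]
      rw [h1]
      have h2 : ∀ j : Fin q, A i j * A i j = 1 := by
        intro j; rcases h i j with h1 | h1 <;> rw [h1] <;> ring
      simp [h2]
    have hAT : Aᴴ = Aᵀ := by ext i j; simp [Matrix.conjTranspose_apply]
    simp only [Matrix.trace, Matrix.diag, ← hAT, hGii]
    simp
  have hsum : ∑ i, μ i = (q:ℝ) * q := by rw [← htrace, htrace2]
  have amgm := Real.geom_mean_le_arith_mean_weighted Finset.univ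
      (fun _ => 1/(q:ℝ)) μ (fun i _ => by positivity)
      (by simp [Finset.sum_const, hq']) (fun i _ => hμ0 i)
  have hle : ∏ i, μ i ^ (1/(q:ℝ)) ≤ (q:ℝ) := by
    calc ∏ i, μ i ^ (1/(q:ℝ)) ≤ ∑ i, (1/(q:ℝ)) * μ i := amgm
    _ = (1/(q:ℝ)) * ∑ i, μ i := by rw [Finset.mul_sum]
    _ = (q:ℝ) := by rw [hsum]; field_simp
  have hpow : (∏ i, μ i ^ (1/(q:ℝ)))^q = ∏ i, μ i := by
    rw [← Finset.prod_pow]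
    congr 1; funext i
    rw [← Real.rpow_natCast (μ i ^ (1/(q:ℝ))) q, ← Real.rpow_mul (hμ0 i)]
    rw [one_div, inv_mul_cancel₀ hq', Real.rpow_one]
  calc (A.det)^2 = ∏ i, μ i := hdet
  _ = (∏ i, μ i ^ (1/(q:ℝ)))^q := hpow.symm
  _ ≤ (q:ℝ)^q := by
      apply pow_le_pow_left₀ (Finset.prod_nonneg (fun i _ => Real.rpow_nonneg (hμ0 i) _)) hle


lemma det01_bound (s : ℕ) (A : Matrix (Fin (s+1)) (Fin (s+1)) ℝ)
    (h01 : ∀ i j, A i j = 0 ∨ A i j = 1) (h0 : ∀ j, A 0 j = 1) :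
    (∃ z : ℤ, A.det = z) ∧ (A.det)^2 ≤ ((s+1:ℕ):ℝ)^(s+1) / 4^s := by
  constructor
  · refine int_det A (fun i j => ?_)
    rcases h01 i j with h | h
    · exact ⟨0, by rw [h]; simp⟩
    · exact ⟨1, by rw [h]; simp⟩
  · set E : Matrix (Fin (s+1)) (Fin (s+1)) ℝ := Matrix.of (fun i j => 2 * A i j - 1) with hEdef
    have hEpm : ∀ i j, E i j = 1 ∨ E i j = -1 := by
      intro i j
      rcases h01 i j with h | h
      · right; simp [hEdef, h]
      · left; simp [hEdef, h]; norm_num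
    have hF : (Matrix.of fun i j => (if i = (0 : Fin (s+1)) then (1:ℝ) else 2) * A i j).det
        = 2^s * A.det := by
      rw [Matrix.det_mul_column]
      congr 1
      rw [Fin.prod_univ_succ]
      simp [Fin.succ_ne_zero]
    have hEF : E.det = (Matrix.of fun i j => (if i = (0 : Fin (s+1)) then (1:ℝ) else 2) * A i j).det := by
      apply Matrix.det_eq_of_forall_row_eq_smul_add_const
        (fun i => if i = 0 then (0:ℝ) else -1) 0 (by simp)
      intro i j
      by_cases hi : i = 0
      · subst hi; simp [hEdef, h0 j]; norm_num
      · simp [hEdef, hi, h0 j]; ring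
    have hE2 : (E.det)^2 ≤ ((s+1:ℕ):ℝ)^(s+1) := hadamard_pm1 (s+1) E hEpm
    rw [hEF, hF] at hE2
    have h4 : (0:ℝ) < 4^s := by positivity
    have key : (2^s * A.det)^2 = 4^s * (A.det)^2 := by
      rw [mul_pow]
      congr 1
      rw [← pow_mul, mul_comm, pow_mul]
      norm_num
    rw [key] at hE2
    rw [le_div_iff₀ h4]
    linarith [hE2]

lemma gpow_mono (n : ℕ) : (n:ℝ)^n / 4^(n-1) ≤ ((n+1:ℕ):ℝ)^(n+1) / 4^n := by
  rcases Nat.eq_zero_or_pos n with hn | hn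
  · subst hn; norm_num
  have hn' : (0:ℝ) < n := Nat.cast_pos.mpr hn
  have hbern : (2:ℝ) * (n:ℝ)^n ≤ ((n:ℝ)+1)^n := by
    have h1 : (1:ℝ) + n * (1/n) ≤ (1 + 1/n)^n := by
      apply one_add_mul_le_pow
      have h0 : (0:ℝ) ≤ 1/n := by positivity
      linarith
    have h2 : (1:ℝ) + n * (1/n) = 2 := by field_simp; ring
    have h3 : ((1:ℝ) + 1/n)^n * (n:ℝ)^n = ((n:ℝ)+1)^n := by
      rw [← mul_pow]
      congr 1
      field_simp
    calc (2:ℝ) * (n:ℝ)^n = ((1:ℝ) + n * (1/n)) * (n:ℝ)^n := by rw [h2]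
    _ ≤ ((1:ℝ) + 1/n)^n * (n:ℝ)^n := by
        apply mul_le_mul_of_nonneg_right h1 (by positivity)
    _ = ((n:ℝ)+1)^n := h3
  have hkey : (4:ℝ) * (n:ℝ)^n ≤ ((n:ℝ)+1)^(n+1) := by
    have h2n : (2:ℝ) ≤ (n:ℝ)+1 := by
      have : (1:ℝ) ≤ n := by exact_mod_cast hn
      linarith
    calc (4:ℝ) * (n:ℝ)^n = 2 * (2 * (n:ℝ)^n) := by ring
    _ ≤ ((n:ℝ)+1) * (((n:ℝ)+1)^n) := by
        apply mul_le_mul h2n hbern (by positivity) (by positivity)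
    _ = ((n:ℝ)+1)^(n+1) := by rw [← pow_succ']
  have h4pos : (0:ℝ) < 4^n := by positivity
  have hsub : n - 1 + 1 = n := Nat.succ_pred_eq_of_pos hn
  have h4eq : (4:ℝ)^n = 4 * 4^(n-1) := by
    conv_lhs => rw [← hsub]
    rw [pow_succ]
    ring
  rw [div_le_div_iff₀ (by positivity) h4pos]
  push_cast
  rw [h4eq]
  calc (n:ℝ)^n * (4 * 4^(n-1)) = (4 * (n:ℝ)^n) * 4^(n-1) := by ring
  _ ≤ ((n:ℝ)+1)^(n+1) * 4^(n-1) := by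
      apply mul_le_mul_of_nonneg_right hkey (by positivity)

lemma gpow_one_le (t : ℕ) (ht : 1 ≤ t) : (1:ℝ) ≤ (t:ℝ)^t / 4^(t-1) := by
  induction t with
  | zero => omega
  | succ n IH =>
    rcases Nat.eq_zero_or_pos n with hn | hn
    · subst hn; norm_num
    calc (1:ℝ) ≤ (n:ℝ)^n / 4^(n-1) := IH hn
    _ ≤ ((n+1:ℕ):ℝ)^(n+1) / 4^n := gpow_mono n
    _ = ((n+1:ℕ):ℝ)^(n+1) / 4^(n+1-1) := by norm_num


lemma dep_lemma (m : ℕ) : ∀ (θ : ℕ) (j₀ : Fin θ) (w : Fin (m+1) → Fin θ → ℝ),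
    (∀ i, w i j₀ = 1) → (∀ i j, w i j = 0 ∨ w i j = 1) →
    (∃ c : Fin (m+1) → ℝ, (∃ i, c i ≠ 0) ∧ ∀ j, ∑ i, c i * w i j = 0) →
    ∃ lam : Fin (m+1) → ℝ, (∀ i, ∃ z : ℤ, lam i = z) ∧ (∃ i, lam i ≠ 0) ∧
      (∀ j, ∑ i, lam i * w i j = 0) ∧ (∀ i, (lam i)^2 ≤ (m:ℝ)^m / 4^(m-1)) := by
  induction m with
  | zero =>
    rintro θ j₀ w h1 h01 ⟨c, ⟨i0, hi0⟩, hdep⟩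
    exfalso
    have h := hdep j₀
    have hi00 : i0 = 0 := Fin.eq_zero i0
    rw [Fin.sum_univ_one, h1 0, mul_one] at h
    exact hi0 (hi00 ▸ h)
  | succ m IH =>
    rintro θ j₀ w h1 h01 hdep
    set u : Fin (m+1) → Fin θ → ℝ := fun i => w i.castSucc with hudef
    by_cases hc : ∃ c : Fin (m+1) → ℝ, (∃ i, c i ≠ 0) ∧ ∀ j, ∑ i, c i * u i j = 0
    · obtain ⟨lam, hint, hne, hsum, hbd⟩ := IH θ j₀ u (fun i => h1 _) (fun i j => h01 _ _) hc
      refine ⟨Fin.snoc lam 0, ?_, ?_, ?_, ?_⟩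
      · intro i
        refine Fin.lastCases ?_ ?_ i
        · exact ⟨0, by simp⟩
        · intro k; simpa using hint k
      · obtain ⟨i, hi⟩ := hne
        exact ⟨i.castSucc, by simpa using hi⟩
      · intro j
        rw [Fin.sum_univ_castSucc]
        simpa using hsum j
      · intro i
        refine Fin.lastCases ?_ ?_ i
        · simp only [Fin.snoc_last]
          have h02 : (0:ℝ)^2 = 0 := by norm_num
          rw [h02]
          positivity
        · intro k
          simp only [Fin.snoc_castSucc]
          exact le_trans (hbd k) (gpow_mono m)
    · -- independent case
      have hind : ∀ c : Fin (m+1) → ℝ, (∀ j, ∑ i, c i * u i j = 0) → ∀ i, c i = 0 := by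
        intro c hj i
        by_contra hne
        exact hc ⟨c, ⟨i, hne⟩, hj⟩
      obtain ⟨c, ⟨i0, hi0⟩, hdepc⟩ := hdep
      have hclast : c (Fin.last (m+1)) ≠ 0 := by
        intro h0
        have hz : ∀ j, ∑ i : Fin (m+1), c i.castSucc * u i j = 0 := by
          intro j
          have := hdepc j
          rw [Fin.sum_univ_castSucc, h0] at this
          simpa using this
        have hall := hind _ hz
        refine hi0 ?_
        refine Fin.lastCases h0 (fun k => hall k) i0
      set cc : Fin (m+1) → ℝ := fun l => - c l.castSucc / c (Fin.last (m+1)) with hccdef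
      have hcc : ∀ j, w (Fin.last (m+1)) j = ∑ l, cc l * u l j := by
        intro j
        have h := hdepc j
        rw [Fin.sum_univ_castSucc] at h
        have hs : ∑ l, cc l * u l j
            = (-(1:ℝ)/c (Fin.last (m+1))) * ∑ l, c l.castSucc * u l j := by
          rw [Finset.mul_sum]
          refine Finset.sum_congr rfl (fun l _ => ?_)
          rw [hccdef]
          field_simp
        rw [hs]
        have hsum0 : ∑ l : Fin (m+1), c l.castSucc * u l j
            = - (c (Fin.last (m+1)) * w (Fin.last (m+1)) j) := by linarith
        rw [hsum0]
        field_simp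
      -- columns span everything
      set W : Matrix (Fin (m+1)) (Fin θ) ℝ := Matrix.of u with hWdef
      set col : Fin θ → (Fin (m+1) → ℝ) := fun j i => u i j with hcoldef
      have hWt : Wᵀ = Matrix.of col := by
        ext j i; simp [hWdef, hcoldef, Matrix.transpose_apply]
      have hrankWt : Wᵀ.rank = m+1 := by
        have hinj : Function.Injective (Wᵀ.mulVecLin) := by
          rw [← LinearMap.ker_eq_bot]
          rw [Submodule.eq_bot_iff]
          intro v hv
          rw [LinearMap.mem_ker] at hv
          have hv' : ∀ j, ∑ i, v i * u i j = 0 := by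
            intro j
            have := congrFun hv j
            simpa [Matrix.mulVecLin_apply, Matrix.mulVec, dotProduct, Matrix.vecMul,
              Matrix.transpose_apply, hWdef, mul_comm] using this
          funext i
          exact hind v hv' i
        rw [Matrix.rank]
        rw [LinearMap.finrank_range_of_inj hinj]
        simp [Module.finrank_fin_fun]
      have hrankW : W.rank = m+1 := by rw [← Matrix.rank_transpose, hrankWt]
      have hspan : Submodule.span ℝ (Set.range col) = ⊤ := by
        apply Submodule.eq_top_of_finrank_eq
        have := W.rank_eq_finrank_span_cols
        rw [hrankW] at this
        have hrc : Set.range W.col = Set.range col := rfl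
        rw [hrc] at this
        rw [← this]
        simp [Module.finrank_fin_fun]
      -- extract a basis from columns containing col j₀
      have hcolj0 : col j₀ ≠ 0 := by
        intro h0
        have := congrFun h0 0
        simp [hcoldef, hudef, h1] at this
      have hone : ({col j₀} : Set (Fin (m+1) → ℝ)) ⊆ Set.range col :=
        Set.singleton_subset_iff.mpr ⟨j₀, rfl⟩
      obtain ⟨b, hbt, hsb, hbspan, hbli⟩ :=
        exists_linearIndepOn_id_extension ((linearIndepOn_singleton_iff (R := ℝ) (v := id)).mpr hcolj0) hone
      have hfin : b.Finite := (Set.finite_range col).subset hbt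
      haveI := hfin.fintype
      have hbspan' : Submodule.span ℝ b = ⊤ := by
        rw [eq_top_iff, ← hspan]
        exact Submodule.span_le.mpr hbspan
      have hbasis : Module.Basis b ℝ (Fin (m+1) → ℝ) :=
        Module.Basis.mk (hbli : LinearIndependent ℝ ((↑) : b → (Fin (m+1) → ℝ))) (by simp only [id]; rw [Subtype.range_coe, hbspan'])
      have hcard : Fintype.card b = m+1 := by
        have := Module.finrank_eq_card_basis hbasis
        simp only [Module.finrank_fin_fun] at this
        omega
      have e0 : b ≃ Fin (m+1) := Fintype.equivFinOfCardEq hcard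
      have hj0b : col j₀ ∈ b := hsb rfl
      set e : Fin (m+1) → b := fun k => e0.symm ((Equiv.swap (0 : Fin (m+1)) (e0 ⟨col j₀, hj0b⟩)) k) with hedef
      have heinj : Function.Injective e :=
        e0.symm.injective.comp (Equiv.swap _ _).injective
      have he0 : (e 0 : Fin (m+1) → ℝ) = col j₀ := by
        simp [hedef]
      -- choose column indices
      have hgex : ∀ k : Fin (m+1), ∃ j : Fin θ, col j = (e k : Fin (m+1) → ℝ) := by
        intro k
        exact hbt (e k).2
      set g : Fin (m+1) → Fin θ :=
        fun k => if k = 0 then j₀ else (hgex k).choose with hgdef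
      have hg : ∀ k, col (g k) = (e k : Fin (m+1) → ℝ) := by
        intro k
        by_cases hk : k = 0
        · subst hk; simp only [hgdef, if_pos rfl]; exact he0.symm
        · simp only [hgdef, if_neg hk]; exact (hgex k).choose_spec
      have hg0 : g 0 = j₀ := by simp [hgdef]
      set A : Matrix (Fin (m+1)) (Fin (m+1)) ℝ := Matrix.of (fun k l => u l (g k)) with hAdef
      have hA01 : ∀ k l, A k l = 0 ∨ A k l = 1 := fun k l => h01 _ _
      have hArow0 : ∀ l, A 0 l = 1 := by
        intro l
        simp only [hAdef, Matrix.of_apply, hg0]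
        exact h1 _
      have hdetA : A.det ≠ 0 := by
        intro hdet0
        obtain ⟨v, hv0, hvmul⟩ := Matrix.exists_vecMul_eq_zero_iff.mpr hdet0
        have hli' : LinearIndependent ℝ (fun k : Fin (m+1) => (e k : Fin (m+1) → ℝ)) :=
          (hbli : LinearIndependent ℝ ((↑) : b → (Fin (m+1) → ℝ))).comp e heinj
        have hsum0 : ∑ k, v k • (e k : Fin (m+1) → ℝ) = 0 := by
          funext l
          have := congrFun hvmul l
          simpa [Matrix.vecMul, dotProduct, hAdef, ← hg, hcoldef,
            Finset.sum_apply] using this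
        exact hv0 (funext (Fintype.linearIndependent_iff.mp hli' v hsum0))
      set bvec : Fin (m+1) → ℝ := fun k => w (Fin.last (m+1)) (g k) with hbvecdef
      have hbvec0 : bvec 0 = 1 := by simp only [hbvecdef, hg0]; exact h1 _
      have hbvec01 : ∀ k, bvec k = 0 ∨ bvec k = 1 := fun k => h01 _ _
      have hAcc : A.mulVec cc = bvec := by
        funext k
        simp only [Matrix.mulVec, dotProduct, hAdef, Matrix.of_apply, hbvecdef]
        rw [hcc (g k)]
        exact Finset.sum_congr rfl (fun l _ => by ring)
      set lamv : Fin (m+1) → ℝ := A.cramer bvec with hlamvdef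
      have hcram : A.mulVec lamv = A.det • bvec := Matrix.mulVec_cramer A bvec
      have hmu : (fun l => lamv l - A.det * cc l) = 0 := by
        apply Matrix.eq_zero_of_mulVec_eq_zero hdetA
        funext k
        have h1' := congrFun hcram k
        have h2' := congrFun hAcc k
        simp only [Matrix.mulVec, dotProduct] at h1' h2' ⊢
        simp only [mul_sub]
        rw [Finset.sum_sub_distrib]
        rw [h1']
        have : ∑ l, A k l * (A.det * cc l) = A.det * ∑ l, A k l * cc l := by
          rw [Finset.mul_sum]
          exact Finset.sum_congr rfl (fun l _ => by ring)
        rw [this, h2']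
        simp [Pi.smul_apply]
      have hlamv_eq : ∀ l, lamv l = A.det * cc l := by
        intro l
        have := congrFun hmu l
        simp at this
        linarith
      -- final lambda
      refine ⟨Fin.snoc lamv (-A.det), ?_, ?_, ?_, ?_⟩
      · intro i
        refine Fin.lastCases ?_ ?_ i
        · simp only [Fin.snoc_last]
          obtain ⟨z, hz⟩ := (det01_bound m A hA01 hArow0).1
          exact ⟨-z, by rw [hz]; simp⟩
        · intro k
          simp only [Fin.snoc_castSucc]
          have : lamv k = (A.updateCol k bvec).det := Matrix.cramer_apply A bvec k
          rw [this]
          refine (det01_bound m (A.updateCol k bvec) ?_ ?_).1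
          · intro i' j'
            rw [Matrix.updateCol_apply]
            split
            · exact hbvec01 i'
            · exact hA01 i' j'
          · intro j'
            rw [Matrix.updateCol_apply]
            split
            · exact hbvec0
            · exact hArow0 j'
      · exact ⟨Fin.last (m+1), by simp [Fin.snoc_last, hdetA]⟩
      · intro j
        rw [Fin.sum_univ_castSucc]
        simp only [Fin.snoc_castSucc, Fin.snoc_last]
        have hterm : ∀ l : Fin (m+1), lamv l * w l.castSucc j = A.det * (cc l * u l j) := by
          intro l
          rw [hlamv_eq l]
          simp only [hudef]
          ring
        rw [Finset.sum_congr rfl (fun l _ => hterm l), ← Finset.mul_sum, ← hcc j]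
        ring
      · intro i
        refine Fin.lastCases ?_ ?_ i
        · simp only [Fin.snoc_last]
          have := (det01_bound m A hA01 hArow0).2
          calc (-A.det)^2 = (A.det)^2 := by ring
          _ ≤ _ := this
        · intro k
          simp only [Fin.snoc_castSucc]
          have : lamv k = (A.updateCol k bvec).det := Matrix.cramer_apply A bvec k
          rw [this]
          refine (det01_bound m (A.updateCol k bvec) ?_ ?_).2
          · intro i' j'
            rw [Matrix.updateCol_apply]
            split
            · exact hbvec01 i'
            · exact hA01 i' j'
          · intro j'
            rw [Matrix.updateCol_apply]
            split
            · exact hbvec0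
            · exact hArow0 j'


lemma upper_mem (m : ℕ) (hm : 1 ≤ m) (a : ℝ) (r : ℝ) :
    (m : ℕ) ∈ {θ : ℕ | 0 < θ ∧ ∃ x y : Fin θ → ℝ,
      {t : ℝ | ∃ i : ℕ, i < m+1 ∧ t = a * r ^ i} ⊆
      {t : ℝ | ∃ z : Fin θ → ℝ, (∀ i, z i = x i ∨ z i = y i) ∧ t = ∑ i, z i}} := by
  refine ⟨hm, fun i => if (i:ℕ) = 0 then a else 0,
    fun i => (a*r^((i:ℕ)+1) - a*r^(i:ℕ)) + (if (i:ℕ) = 0 then a else 0), ?_⟩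
  rintro t ⟨k, hk, rfl⟩
  refine ⟨fun i => (if (i:ℕ) = 0 then a else 0) +
    (if (i:ℕ) < k then a*r^((i:ℕ)+1) - a*r^(i:ℕ) else 0), ?_, ?_⟩
  · intro i
    by_cases hik : (i:ℕ) < k
    · right; simp only [if_pos hik]; ring
    · left; simp only [if_neg hik]; ring
  · have hsplit : ∑ i : Fin m, ((if (i:ℕ) = 0 then a else 0) +
        (if (i:ℕ) < k then a*r^((i:ℕ)+1) - a*r^(i:ℕ) else 0))
      = (∑ i : Fin m, if (i:ℕ) = 0 then a else 0) +
        (∑ i : Fin m, if (i:ℕ) < k then a*r^((i:ℕ)+1) - a*r^(i:ℕ) else 0) :=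
      Finset.sum_add_distrib
    have hx : (∑ i : Fin m, if (i:ℕ) = 0 then a else 0) = a := by
      rw [Fin.sum_univ_eq_sum_range (fun i => if i = 0 then a else 0) m]
      rw [Finset.sum_ite_eq' (Finset.range m) 0 (fun _ => a)]
      simp [Finset.mem_range, hm]
      omega
    have hy : (∑ i : Fin m, if (i:ℕ) < k then a*r^((i:ℕ)+1) - a*r^(i:ℕ) else 0)
        = a * r^k - a := by
      rw [Fin.sum_univ_eq_sum_range (fun i => if i < k then a*r^(i+1) - a*r^i else 0) m]
      have hsub : Finset.range k ⊆ Finset.range m := by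
        apply Finset.range_subset_range.mpr; omega
      rw [← Finset.sum_subset hsub (fun i _ hi => by
        rw [if_neg]; simpa [Finset.mem_range] using hi)]
      rw [Finset.sum_congr rfl (fun i hi => if_pos (Finset.mem_range.mp hi))]
      rw [Finset.sum_range_sub (fun i => a * r^i) k]
      simp
    rw [hsplit, hx, hy]
    ring


lemma lower_false (m θ : ℕ) (hm : 1 ≤ m) (a r : ℝ) (ha : a ≠ 0)
    (hr : (m:ℝ)^((m:ℝ)/2)/2^(m-1) + 1 ≤ r)
    (hθpos : 0 < θ) (hθ : θ < m) (x y : Fin θ → ℝ)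
    (hsub : {t : ℝ | ∃ i : ℕ, i < m+1 ∧ t = a*r^i} ⊆
      {t : ℝ | ∃ z : Fin θ → ℝ, (∀ i, z i = x i ∨ z i = y i) ∧ t = ∑ i, z i}) : False := by
  have hz : ∀ i : Fin (m+1), ∃ z : Fin θ → ℝ,
      (∀ j, z j = x j ∨ z j = y j) ∧ a*r^(i:ℕ) = ∑ j, z j :=
    fun i => hsub ⟨i, i.isLt, rfl⟩
  choose z hzxy hzsum using hz
  set ε : Fin (m+1) → Fin θ → ℝ := fun i j => if z i j = x j then 0 else 1 with hεdef
  have hzeq : ∀ i j, z i j = x j + ε i j * (y j - x j) := by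
    intro i j
    by_cases h : z i j = x j
    · simp [hεdef, h]
    · rcases hzxy i j with h' | h'
      · exact absurd h' h
      · have hε1 : ε i j = 1 := by simp [hεdef, h]
        rw [hε1, h']; ring
  set w : Fin (m+1) → Fin (θ+1) → ℝ := fun i => Fin.cons 1 (ε i) with hwdef
  have hw1 : ∀ i, w i 0 = 1 := fun i => rfl
  have hw01 : ∀ (i : Fin (m+1)) (j : Fin (θ+1)), w i j = 0 ∨ w i j = 1 := by
    intro i j
    refine Fin.cases ?_ ?_ j
    · right; rfl
    · intro j'
      simp only [hwdef, Fin.cons_succ, hεdef]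
      by_cases h : z i j' = x j'
      · left; rw [if_pos h]
      · right; rw [if_neg h]
  have hnotli : ¬ LinearIndependent ℝ w := by
    intro hli
    have hcard := hli.fintype_card_le_finrank
    simp only [Fintype.card_fin, Module.finrank_fin_fun] at hcard
    omega
  rw [Fintype.not_linearIndependent_iff] at hnotli
  obtain ⟨c, hcsum, i0, hci0⟩ := hnotli
  have hdepc : ∀ j, ∑ i, c i * w i j = 0 := by
    intro j
    have := congrFun hcsum j
    simpa [Finset.sum_apply] using this
  obtain ⟨lam, hint, ⟨iw, hiw⟩, hlamsum, hbd⟩ :=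
    dep_lemma m (θ+1) 0 w hw1 hw01 ⟨c, ⟨i0, hci0⟩, hdepc⟩
  set D : ℝ := (m:ℝ)^((m:ℝ)/2)/2^(m-1) with hDdef
  have hD0 : 0 ≤ D := by positivity
  have hD2 : D^2 = (m:ℝ)^m / 4^(m-1) := by
    rw [hDdef, div_pow]
    congr 1
    · rw [← Real.rpow_natCast ((m:ℝ)^((m:ℝ)/2)) 2, ← Real.rpow_mul (Nat.cast_nonneg m)]
      rw [show ((m:ℝ)/2) * ((2:ℕ):ℝ) = ((m:ℕ):ℝ) by push_cast; ring, Real.rpow_natCast]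
    · rw [← pow_mul, mul_comm, pow_mul]
      norm_num
  have hD1 : (1:ℝ) ≤ D := by
    nlinarith [gpow_one_le m hm, hD2, hD0]
  have hrD : D ≤ r - 1 := by linarith
  have hrpos : (0:ℝ) < r := by linarith
  have habs : ∀ i, |lam i| ≤ r - 1 := by
    intro i
    have h2 := hbd i
    rw [← hD2] at h2
    nlinarith [abs_nonneg (lam i), sq_abs (lam i)]
  have h0sum : ∑ i, lam i = 0 := by
    have := hlamsum 0
    simpa [hwdef] using this
  have hjsum : ∀ j : Fin θ, ∑ i, lam i * ε i j = 0 := by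
    intro j
    have := hlamsum j.succ
    simpa [hwdef] using this
  have hpoly : ∑ i : Fin (m+1), lam i * r^(i:ℕ) = 0 := by
    have key : ∑ i : Fin (m+1), lam i * (a * r^(i:ℕ)) = 0 := by
      have har : ∀ i : Fin (m+1), a * r^(i:ℕ) = (∑ j, x j) + ∑ j, ε i j * (y j - x j) := by
        intro i
        rw [hzsum i, Finset.sum_congr rfl (fun j _ => hzeq i j), Finset.sum_add_distrib]
      calc ∑ i, lam i * (a * r^(i:ℕ))
          = ∑ i, (lam i * (∑ j, x j) + ∑ j, lam i * (ε i j * (y j - x j))) := by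
            refine Finset.sum_congr rfl (fun i _ => ?_)
            rw [har i, mul_add, Finset.mul_sum, Finset.mul_sum]
      _ = (∑ i, lam i) * (∑ j, x j)
            + ∑ j : Fin θ, (∑ i, lam i * ε i j) * (y j - x j) := by
            rw [Finset.sum_add_distrib, ← Finset.sum_mul]
            congr 1
            rw [Finset.sum_comm]
            refine Finset.sum_congr rfl (fun j _ => ?_)
            rw [Finset.sum_mul]
            refine Finset.sum_congr rfl (fun i _ => by ring)
      _ = 0 := by
            rw [h0sum]
            simp [hjsum]
    have hmul : a * ∑ i : Fin (m+1), lam i * r^(i:ℕ) = 0 := by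
      rw [Finset.mul_sum, ← key]
      exact Finset.sum_congr rfl (fun i _ => by ring)
    rcases mul_eq_zero.mp hmul with h | h
    · exact absurd h ha
    · exact h
  set cfun : ℕ → ℝ := fun i => if h : i < m+1 then lam ⟨i, h⟩ else 0 with hcdef
  have hcr : ∑ i ∈ Finset.range (m+1), cfun i * r^i = 0 := by
    rw [← Fin.sum_univ_eq_sum_range (fun i => cfun i * r^i) (m+1), ← hpoly]
    refine Finset.sum_congr rfl (fun i _ => ?_)
    simp [hcdef, i.isLt, i.is_le]
  set T := (Finset.range (m+1)).filter (fun i => cfun i ≠ 0) with hTdef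
  have hTne : T.Nonempty := by
    refine ⟨iw, ?_⟩
    simp only [hTdef, Finset.mem_filter, Finset.mem_range]
    refine ⟨iw.isLt, ?_⟩
    simpa [hcdef, iw.isLt, iw.is_le] using hiw
  set k := T.max' hTne with hkdef
  have hkT : k ∈ T := T.max'_mem hTne
  have hkm : k < m+1 := by
    have := hkT
    simp only [hTdef, Finset.mem_filter, Finset.mem_range] at this
    exact this.1
  have hck : cfun k ≠ 0 := by
    have := hkT
    simp only [hTdef, Finset.mem_filter] at this
    exact this.2
  have hmax : ∀ i, k < i → cfun i = 0 := by
    intro i hi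
    by_contra h
    by_cases him : i < m+1
    · have hiT : i ∈ T := by
        simp only [hTdef, Finset.mem_filter, Finset.mem_range]
        exact ⟨him, h⟩
      have := T.le_max' i hiT
      omega
    · exact h (by simp only [hcdef]; exact dif_neg him)
  have hsplit : cfun k * r^k + ∑ i ∈ Finset.range k, cfun i * r^i = 0 := by
    have he : ∑ i ∈ Finset.range (k+1), cfun i * r^i = 0 := by
      rw [Finset.sum_subset (Finset.range_subset_range.mpr (by omega : k+1 ≤ m+1))
        (fun i _ hi => ?_), hcr]
      rw [hmax i (by simpa [Finset.mem_range] using hi)]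
      ring
    rw [Finset.sum_range_succ] at he
    linarith
  have h1le : (1:ℝ) ≤ |cfun k| := by
    obtain ⟨zz, hzz⟩ := hint ⟨k, hkm⟩
    have hceq : cfun k = (zz:ℝ) := by
      rw [hcdef]
      simpa [hkm, Nat.lt_add_one_iff.mp hkm] using hzz
    rw [hceq]
    have hzz0 : zz ≠ 0 := by
      intro h0
      rw [h0] at hceq
      exact hck (by simpa using hceq)
    have := Int.one_le_abs hzz0
    calc (1:ℝ) = ((1:ℤ):ℝ) := by norm_num
    _ ≤ ((|zz|:ℤ):ℝ) := by exact_mod_cast this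
    _ = |(zz:ℝ)| := by push_cast; ring
  have hbound : |cfun k| * r^k ≤ (r-1) * ∑ i ∈ Finset.range k, r^i := by
    have hckr : cfun k * r^k = - ∑ i ∈ Finset.range k, cfun i * r^i := by linarith
    calc |cfun k| * r^k = |cfun k * r^k| := by
          rw [abs_mul, abs_of_nonneg (pow_nonneg hrpos.le k)]
    _ = |∑ i ∈ Finset.range k, cfun i * r^i| := by rw [hckr, abs_neg]
    _ ≤ ∑ i ∈ Finset.range k, |cfun i * r^i| := Finset.abs_sum_le_sum_abs _ _
    _ ≤ ∑ i ∈ Finset.range k, (r-1) * r^i := by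
          refine Finset.sum_le_sum (fun i _ => ?_)
          rw [abs_mul, abs_of_nonneg (pow_nonneg hrpos.le i)]
          refine mul_le_mul_of_nonneg_right ?_ (pow_nonneg hrpos.le i)
          by_cases him : i < m+1
          · have : cfun i = lam ⟨i, him⟩ := by simp [hcdef, him, Nat.lt_add_one_iff.mp him]
            rw [this]
            exact habs _
          · rw [show cfun i = 0 by simp only [hcdef]; exact dif_neg him]
            simp
            linarith
    _ = (r-1) * ∑ i ∈ Finset.range k, r^i := by rw [Finset.mul_sum]
  have hgeom : (r-1) * ∑ i ∈ Finset.range k, r^i = r^k - 1 := by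
    have := geom_sum_mul r k
    linarith [this]
  have hfinal : r^k ≤ r^k - 1 := by
    calc r^k = 1 * r^k := (one_mul _).symm
    _ ≤ |cfun k| * r^k := mul_le_mul_of_nonneg_right h1le (pow_nonneg hrpos.le k)
    _ ≤ (r-1) * ∑ i ∈ Finset.range k, r^i := hbound
    _ = r^k - 1 := hgeom
  linarith

/-- The (additive) complexity of a set `A` of reals: the smallest positive integer `θ`
for which there exist reals `x 1, ..., x θ, y 1, ..., y θ` with
`A ⊆ {x 1, y 1} + ... + {x θ, y θ}` (Minkowski sumset). -/
noncomputable def complexity (A : Set ℝ) : ℕ :=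
  sInf {θ : ℕ | 0 < θ ∧ ∃ x y : Fin θ → ℝ,
    A ⊆ {t : ℝ | ∃ z : Fin θ → ℝ, (∀ i, z i = x i ∨ z i = y i) ∧ t = ∑ i, z i}}

/-- Geometric progressions with common ratio `r ≥ D(M-1) + 1`, where
`D t = t^(t/2)/2^(t-1)` is the Hadamard bound, have the highest possible complexity
`M - 1`. -/
theorem stmt_13 (M : ℕ) (hM : 2 ≤ M) (a : ℝ) (ha : a ≠ 0) (r : ℝ)
    (hr : ((M - 1 : ℕ) : ℝ) ^ (((M - 1 : ℕ) : ℝ) / 2) / 2 ^ (M - 1 - 1) + 1 ≤ r) :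
    complexity {t : ℝ | ∃ i : ℕ, i < M ∧ t = a * r ^ i} = M - 1 := by
  obtain ⟨m, rfl⟩ : ∃ m, M = m + 1 := ⟨M - 1, by omega⟩
  have hm : 1 ≤ m := by omega
  simp only [Nat.add_sub_cancel] at hr ⊢
  unfold complexity
  have hmem := upper_mem m hm a r
  apply le_antisymm
  · exact Nat.sInf_le hmem
  · apply le_csInf ⟨m, hmem⟩
    rintro θ ⟨hθpos, x, y, hsub⟩
    by_contra hlt
    push_neg at hlt
    exact absurd (lower_false m θ hm a r ha hr hθpos hlt x y hsub) (fun h => h)
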